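/- arXiv:1412.1186 — 3 statements merged into one kernel-verified Lean document; each statement's English description precedes it below -/
import Mathlib

section
/- Fix a real number d and a set I of positive real numbers satisfying the descending chain condition. Then the set of all finite tuples (d_1, …, d_k) (of arbitrary length k) with every entry d_i belonging to I and with sum d_1 + ⋯ + d_k = d is finite. (Equivalently: the set of finite multisets of elements of I whose sum equals d is finite.) -/
open Pointwise


/-- A set of real numbers satisfies the descending chain condition (DCC)
if it contains no infinite strictly decreasing sequence. -/
def SatisfiesDCC (S : Set ℝ) : Prop :=
  ¬ ∃ f : ℕ → ℝ, (∀ n, f n ∈ S) ∧ StrictAnti f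

/-- Sums of lists of length `k` with entries in `I`. -/
def sumsSet (I : Set ℝ) (k : ℕ) : Set ℝ :=
  {x | ∃ l : List ℝ, (∀ y ∈ l, y ∈ I) ∧ l.length = k ∧ l.sum = x}

lemma sumsSet_isWF (I : Set ℝ) (hWF : I.IsWF) (k : ℕ) : (sumsSet I k).IsWF := by
  induction k with
  | zero =>
    have : sumsSet I 0 ⊆ {0} := by
      rintro x ⟨l, _, hlen, hsum⟩
      rw [List.length_eq_zero_iff] at hlen
      subst hlen
      simpa using hsum.symm
    exact ((Set.finite_singleton (0 : ℝ)).subset this).isWF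
  | succ k ih =>
    have hsub : sumsSet I (k + 1) ⊆ I + sumsSet I k := by
      rintro x ⟨l, hmem, hlen, hsum⟩
      cases l with
      | nil => simp at hlen
      | cons a l =>
        refine ⟨a, hmem a (by simp), l.sum, ⟨l, fun y hy => hmem y (by simp [hy]),
          by simpa using hlen, rfl⟩, by simpa using hsum⟩
    refine Set.IsWF.mono ?_ hsub
    rw [← Set.isPWO_iff_isWF]
    exact (hWF.isPWO).add ((ih).isPWO)

lemma fixed_length_finite (I : Set ℝ) (hWF : I.IsWF) (k : ℕ) (d : ℝ) :
    {l : List ℝ | (∀ x ∈ l, x ∈ I) ∧ l.length = k ∧ l.sum = d}.Finite := by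
  induction k generalizing d with
  | zero =>
    refine (Set.finite_singleton ([] : List ℝ)).subset ?_
    rintro l ⟨_, hlen, _⟩
    rw [List.length_eq_zero_iff] at hlen
    simp [hlen]
  | succ k ih =>
    have hanti : (Set.antidiagonal I (sumsSet I k) d).Finite :=
      Set.AddAntidiagonal.finite_of_isWF hWF (sumsSet_isWF I hWF k) d
    have hsub : {l : List ℝ | (∀ x ∈ l, x ∈ I) ∧ l.length = k + 1 ∧ l.sum = d} ⊆
        ⋃ p ∈ Set.antidiagonal I (sumsSet I k) d,
          (fun l => p.1 :: l) '' {l : List ℝ | (∀ x ∈ l, x ∈ I) ∧ l.length = k ∧ l.sum = p.2} := by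
      rintro l ⟨hmem, hlen, hsum⟩
      cases l with
      | nil => simp at hlen
      | cons a l =>
        have hl : ∀ x ∈ l, x ∈ I := fun x hx => hmem x (by simp [hx])
        have hlk : l.length = k := by simpa using hlen
        have hp : ((a, l.sum) : ℝ × ℝ) ∈ Set.antidiagonal I (sumsSet I k) d :=
          Set.mem_antidiagonal.2 ⟨hmem a (by simp), ⟨l, hl, hlk, rfl⟩, by simpa using hsum⟩
        exact Set.mem_biUnion hp ⟨l, ⟨hl, hlk, rfl⟩, rfl⟩
    refine (Set.Finite.biUnion hanti fun p _ => ?_).subset hsub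
    exact (ih p.2).image _

/-- Lemma 2.4.1 (l_sum): if `I` is a set of positive real numbers satisfying the
DCC and `d` is a fixed real number, then the set of all finite tuples (here
represented as lists) with entries in `I` and sum `d` is finite. -/
theorem sum_tuples_finite (d : ℝ) (I : Set ℝ)
    (hpos : ∀ x ∈ I, 0 < x) (hdcc : SatisfiesDCC I) :
    {l : List ℝ | (∀ x ∈ l, x ∈ I) ∧ l.sum = d}.Finite := by
  have hWF : I.IsWF := by
    rw [Set.isWF_iff_no_descending_seq]
    intro f hf hmem
    exact hdcc ⟨f, fun n => hmem n, hf⟩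
  rcases Set.eq_empty_or_nonempty I with hI | hI
  · refine (Set.finite_singleton ([] : List ℝ)).subset ?_
    rintro l ⟨hmem, _⟩
    cases l with
    | nil => simp
    | cons a l => exact absurd (hmem a (by simp)) (by simp [hI])
  · set m : ℝ := hWF.min hI with hm
    have hmI : m ∈ I := hWF.min_mem hI
    have hm0 : 0 < m := hpos m hmI
    set N : ℕ := ⌊d / m⌋₊ with hN
    have hsub : {l : List ℝ | (∀ x ∈ l, x ∈ I) ∧ l.sum = d} ⊆
        ⋃ k ∈ Finset.range (N + 1),
          {l : List ℝ | (∀ x ∈ l, x ∈ I) ∧ l.length = k ∧ l.sum = d} := by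
      rintro l ⟨hmem, hsum⟩
      have hle : (l.length : ℝ) * m ≤ d := by
        have := List.card_nsmul_le_sum l m (fun x hx => hWF.min_le hI (hmem x hx))
        rw [nsmul_eq_mul] at this
        linarith [hsum ▸ this]
      have hlN : l.length ≤ N := by
        rw [hN]
        exact Nat.le_floor (by rw [le_div_iff₀ hm0]; exact hle)
      exact Set.mem_biUnion (Finset.mem_range.2 (Nat.lt_succ_of_le hlN)) ⟨hmem, rfl, hsum⟩
    exact (Set.Finite.biUnion (Finset.range (N + 1)).finite_toSet
      fun k _ => fixed_length_finite I hWF k d).subset hsub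
end

section
/- Let J be a finite set of real numbers, each at most one. Define I to be the set of all real numbers a in the half-open interval (0,1] such that a = 1 + a_1 + ⋯ + a_k − k for some positive integer k and some elements a_1, …, a_k of J (repetitions allowed). Then I is a finite set. -/
/-- Lemma 2.4.2 (l_finite): if `J` is a finite set of real numbers, each at most
one, then the set of all `a ∈ (0,1]` of the form `a = 1 + a₁ + ⋯ + a_k − k`
with each `aᵢ ∈ J` is finite. -/
theorem coefficients_finite (J : Set ℝ) (hJfin : J.Finite)
    (hJle : ∀ a ∈ J, a ≤ 1) :
    {a : ℝ | a ∈ Set.Ioc (0 : ℝ) 1 ∧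
      ∃ k : ℕ, 0 < k ∧ ∃ f : Fin k → ℝ, (∀ i, f i ∈ J) ∧
        a = 1 + (∑ i, f i) - k}.Finite := by
  classical
  set F := hJfin.toFinset.filter (· < 1) with hF
  by_cases hne : F.Nonempty
  · set δ := F.inf' hne (fun a => 1 - a) with hδdef
    have hδpos : 0 < δ := by
      rw [hδdef, Finset.lt_inf'_iff]
      intro a ha
      rw [hF, Finset.mem_filter] at ha
      linarith [ha.2]
    set N := ⌈1/δ⌉₊ with hN
    have key : {a : ℝ | a ∈ Set.Ioc (0 : ℝ) 1 ∧
        ∃ k : ℕ, 0 < k ∧ ∃ f : Fin k → ℝ, (∀ i, f i ∈ J) ∧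
          a = 1 + (∑ i, f i) - k} ⊆
        ⋃ m ∈ Finset.range (N + 1),
          (fun g : Fin m → ℝ => 1 + ∑ i, (g i - 1)) ''
            {g : Fin m → ℝ | ∀ i, g i ∈ J ∪ {1}} := by
      rintro a ⟨haIoc, k, hk, f, hfJ, hsum⟩
      have hsum' : a = 1 + ∑ i, (f i - 1) := by
        rw [Finset.sum_sub_distrib]
        simp only [Finset.sum_const, Finset.card_univ, Fintype.card_fin,
          nsmul_eq_mul, mul_one]
        rw [hsum]; ring
      set T := Finset.univ.filter (fun i : Fin k => f i ≠ 1) with hT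
      have hTsum : ∑ i ∈ T, (f i - 1) = ∑ i, (f i - 1) := by
        rw [hT]
        apply Finset.sum_filter_of_ne
        intro i _ hi
        intro h; apply hi; rw [h]; ring
      have hmemF : ∀ i ∈ T, f i ∈ F := by
        intro i hi
        rw [hT, Finset.mem_filter] at hi
        rw [hF, Finset.mem_filter, hJfin.mem_toFinset]
        exact ⟨hfJ i, lt_of_le_of_ne (hJle _ (hfJ i)) hi.2⟩
      have hlb : (T.card : ℝ) * δ ≤ ∑ i ∈ T, (1 - f i) := by
        have := Finset.card_nsmul_le_sum T (fun i => 1 - f i) δ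
          (fun i hi => Finset.inf'_le _ (hmemF i hi))
        simpa [nsmul_eq_mul] using this
      have hub : ∑ i ∈ T, (1 - f i) < 1 := by
        have : ∑ i ∈ T, (1 - f i) = -(∑ i ∈ T, (f i - 1)) := by
          rw [← Finset.sum_neg_distrib]; congr 1; ext i; ring
        rw [this, hTsum]
        have ha0 : 0 < a := haIoc.1
        linarith [hsum']
      have hcard : T.card < N + 1 := by
        have h1 : (T.card : ℝ) < 1 / δ := by
          rw [lt_div_iff₀ hδpos]
          exact lt_of_le_of_lt hlb hub
        have h2 : (1 : ℝ) / δ ≤ N := Nat.le_ceil _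
        have h3 : (T.card : ℝ) < N := lt_of_lt_of_le h1 h2
        have h4 : T.card < N := by exact_mod_cast h3
        omega
      refine Set.mem_biUnion (Finset.mem_range.mpr hcard) ?_
      set e := T.orderIsoOfFin rfl with he
      refine ⟨fun i => f (e i), fun i => Or.inl (hfJ _), ?_⟩
      have hsumT : ∑ i : Fin T.card, (f (e i) - 1) = ∑ i ∈ T, (f i - 1) := by
        rw [← Finset.sum_coe_sort T (fun i => f i - 1)]
        exact Fintype.sum_equiv e.toEquiv _ _ (fun i => rfl)
      simp only
      rw [hsumT, hTsum, ← hsum']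
    apply Set.Finite.subset _ key
    apply Set.Finite.biUnion (Finset.finite_toSet _)
    intro m _
    apply Set.Finite.image
    have : {g : Fin m → ℝ | ∀ i, g i ∈ J ∪ {1}} =
        Set.pi Set.univ (fun _ : Fin m => J ∪ {1}) := by
      ext g; simp [Set.mem_pi]
    rw [this]
    exact Set.Finite.pi (fun _ => hJfin.union (Set.finite_singleton 1))
  · -- F empty: every element of J equals 1, so a = 1 always
    have hJ1 : ∀ a ∈ J, a = 1 := by
      intro a ha
      by_contra h
      exact hne ⟨a, by
        rw [hF, Finset.mem_filter, hJfin.mem_toFinset]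
        exact ⟨ha, lt_of_le_of_ne (hJle a ha) h⟩⟩
    apply Set.Finite.subset (Set.finite_singleton (1 : ℝ))
    rintro a ⟨haIoc, k, hk, f, hfJ, hsum⟩
    have : ∀ i, f i = 1 := fun i => hJ1 _ (hfJ i)
    simp only [Set.mem_singleton_iff]
    rw [hsum]
    simp [this]
end

section
/- Let I be a set of real numbers contained in the interval [0,1] which satisfies the descending chain condition. Then the set { ((r−1)/r) · i : r a positive integer, i ∈ I } also satisfies the descending chain condition. -/
private lemma coef_lt_coef {a b : ℕ} (ha : 0 < a) (hb : 0 < b)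
    (h : ((a : ℝ) - 1) / a < ((b : ℝ) - 1) / b) : a < b := by
  have ha' : (0 : ℝ) < a := by exact_mod_cast ha
  have hb' : (0 : ℝ) < b := by exact_mod_cast hb
  have h1 : 1 - 1 / (a : ℝ) < 1 - 1 / b := by
    rw [sub_div, div_self ha'.ne'] at h
    rw [sub_div, div_self hb'.ne'] at h
    exact h
  have h2 : 1 / (b : ℝ) < 1 / a := by linarith
  have : (a : ℝ) < b := by rw [div_lt_div_iff₀ hb' ha'] at h2; linarith
  exact_mod_cast this

/-- If `I ⊆ [0,1]` satisfies the DCC, then the set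
`{ ((r−1)/r) · i : r a positive integer, i ∈ I }` also satisfies the DCC. -/
theorem dcc_scaled (I : Set ℝ) (hI : I ⊆ Set.Icc (0 : ℝ) 1)
    (hdcc : SatisfiesDCC I) :
    SatisfiesDCC {x : ℝ | ∃ r : ℕ, 0 < r ∧ ∃ i ∈ I, x = ((r : ℝ) - 1) / r * i} := by
  rintro ⟨f, hf, hanti⟩
  choose r hr i hiI hfi using hf
  have hcnn : ∀ n, (0 : ℝ) ≤ ((r n : ℝ) - 1) / r n := by
    intro n
    apply div_nonneg
    · have : (1 : ℝ) ≤ r n := by exact_mod_cast hr n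
      linarith
    · positivity
  have hinn : ∀ n, (0 : ℝ) ≤ i n := fun n => (hI (hiI n)).1
  have hnn : ∀ n, 0 ≤ f n := by
    intro n; rw [hfi n]; exact mul_nonneg (hcnn n) (hinn n)
  have hpos : ∀ n, 0 < f n := fun n =>
    lt_of_le_of_lt (hnn (n + 1)) (hanti (Nat.lt_succ_self n))
  have hipos : ∀ n, 0 < i n := by
    intro n
    rcases (hinn n).lt_or_eq with h | h
    · exact h
    · exfalso; have := hpos n; rw [hfi n, ← h, mul_zero] at this; exact lt_irrefl _ this
  -- I is well-founded, hence partially well-ordered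
  have hWF : I.IsWF := by
    rw [Set.isWF_iff_no_descending_seq]
    intro g hg hmem
    exact hdcc ⟨g, hmem, hg⟩
  obtain ⟨g, hg⟩ := hWF.isPWO.exists_monotone_subseq hiI
  have key : ∀ n, r (g (n + 1)) < r (g n) := by
    intro n
    apply coef_lt_coef (hr _) (hr _)
    have hflt : f (g (n + 1)) < f (g n) := hanti (g.strictMono (Nat.lt_succ_self n))
    rw [hfi, hfi] at hflt
    have hile : i (g n) ≤ i (g (n + 1)) := hg (Nat.le_succ n)
    have h2 : ((r (g n) : ℝ) - 1) / r (g n) * i (g n)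
        ≤ ((r (g n) : ℝ) - 1) / r (g n) * i (g (n + 1)) :=
      mul_le_mul_of_nonneg_left hile (hcnn _)
    have := lt_of_lt_of_le hflt h2
    exact (mul_lt_mul_iff_left₀ (hipos (g (n + 1)))).mp this
  have hle : ∀ n, r (g n) + n ≤ r (g 0) := by
    intro n
    induction n with
    | zero => simp
    | succ k ih => have := key k; omega
  have := hle (r (g 0) + 1)
  omega
end
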